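/- Let n ≥ 1, let Σ be a real symmetric positive definite n×n matrix, let Θ be a real antisymmetric n×n matrix, and let w ∈ ℝⁿ. Set ζ := (−Σ + iΘ) w ∈ ℂⁿ. Then π^{−n/2} √(det Σ) ∫_{ℝⁿ} e^{−uᵀΣu} sin(uᵀΘw) e^{−uᵀΣw} u du = Im( (1/2) e^{(1/4) ζᵀΣ⁻¹ζ} Σ⁻¹ ζ ), where the ℝⁿ-valued integral is taken entrywise and converges absolutely. Equivalently, the left-hand side equals (1/(2i)) ( φ'_Σ((−Σ + iΘ)w) − φ'_Σ(−(Σ + iΘ)w) ), where φ'_Σ(z) := (1/2) e^{(1/4) zᵀΣ⁻¹z} Σ⁻¹ z. -/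

import Mathlib

open MeasureTheory Matrix Real

noncomputable section

/-- Quadratic form `uᵀ A u`. -/
def qf {n : ℕ} (A : Matrix (Fin n) (Fin n) ℝ) (u : Fin n → ℝ) : ℝ := u ⬝ᵥ A.mulVec u

/-- Complex bilinear form `zᵀ A z` (no conjugation) for a real matrix `A`. -/
def qfC {n : ℕ} (A : Matrix (Fin n) (Fin n) ℝ) (z : Fin n → ℂ) : ℂ :=
  z ⬝ᵥ (A.map (fun a => (a : ℂ))).mulVec z

/-- The normalizing constant `π^{-n/2} √(det Σ)`. -/
def gaussConst {n : ℕ} (Sg : Matrix (Fin n) (Fin n) ℝ) : ℝ :=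
  (Real.sqrt (π ^ n))⁻¹ * Real.sqrt Sg.det

/-- `(−Σ + iΘ) w ∈ ℂⁿ`. -/
def zetaP {n : ℕ} (Sg Th : Matrix (Fin n) (Fin n) ℝ) (w : Fin n → ℝ) : Fin n → ℂ :=
  (Sg.map (fun a => (-a : ℂ)) + Complex.I • Th.map (fun a => (a : ℂ))).mulVec
    (fun k => (w k : ℂ))

/-- `−(Σ + iΘ) w ∈ ℂⁿ`. -/
def zetaM {n : ℕ} (Sg Th : Matrix (Fin n) (Fin n) ℝ) (w : Fin n → ℝ) : Fin n → ℂ :=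
  (Sg.map (fun a => (-a : ℂ)) - Complex.I • Th.map (fun a => (a : ℂ))).mulVec
    (fun k => (w k : ℂ))

/-- The gradient `φ'_Σ(z) = (1/2) e^{(1/4) zᵀΣ⁻¹z} Σ⁻¹ z` of the complex
moment-generating function of the Gaussian density `π^{-n/2}√(det Σ) e^{-uᵀΣu}`. -/
def mgfGrad {n : ℕ} (Sg : Matrix (Fin n) (Fin n) ℝ) (z : Fin n → ℂ) : Fin n → ℂ :=
  fun k => (1/2 : ℂ) * Complex.exp ((1/4 : ℂ) * qfC Sg⁻¹ z) *
    (Sg⁻¹.map (fun a => (a : ℂ))).mulVec z k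



section helperLemmas
open Filter
open scoped MatrixOrder


lemma exp_quad_tendsto_atBot (a : ℝ) : Tendsto (fun x : ℝ => -x^2 + a*x) atTop atBot := by
  have : (fun x : ℝ => -x^2 + a*x) = fun x => x * (a - x) := by ext x; ring
  rw [this]
  exact Tendsto.atTop_mul_atBot₀ tendsto_id (tendsto_atBot_add_const_left _ _ (tendsto_neg_atTop_atBot))

lemma exp_quad_tendsto_atBot' (a : ℝ) : Tendsto (fun x : ℝ => -x^2 + a*x) atBot atBot := by
  have : (fun x : ℝ => -x^2 + a*x) = fun x => (-x) * (x - a) := by ext x; ring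
  rw [this]
  exact Tendsto.atTop_mul_atBot₀ (tendsto_neg_atBot_atTop) (tendsto_atBot_add_const_right _ _ tendsto_id)

lemma cexp_quad_tendsto_zero (c : ℂ) : Tendsto (fun x : ℝ => Complex.exp (-x^2 + c*x)) atTop (nhds 0) := by
  rw [tendsto_zero_iff_norm_tendsto_zero]
  have h : ∀ x : ℝ, ‖Complex.exp (-(x:ℂ)^2 + c*x)‖ = Real.exp (-x^2 + c.re*x) := by
    intro x
    rw [Complex.norm_exp]
    congr 1
    simp [Complex.add_re, Complex.neg_re, ← Complex.ofReal_pow, Complex.mul_re]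
  simp_rw [h]
  exact Real.tendsto_exp_atBot.comp (exp_quad_tendsto_atBot c.re)

lemma cexp_quad_tendsto_zero' (c : ℂ) : Tendsto (fun x : ℝ => Complex.exp (-x^2 + c*x)) atBot (nhds 0) := by
  rw [tendsto_zero_iff_norm_tendsto_zero]
  have h : ∀ x : ℝ, ‖Complex.exp (-(x:ℂ)^2 + c*x)‖ = Real.exp (-x^2 + c.re*x) := by
    intro x
    rw [Complex.norm_exp]
    congr 1
    simp [Complex.add_re, Complex.neg_re, ← Complex.ofReal_pow, Complex.mul_re]
  simp_rw [h]
  exact Real.tendsto_exp_atBot.comp (exp_quad_tendsto_atBot' c.re)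

lemma cexp_norm_simple (c : ℂ) (x : ℝ) : ‖Complex.exp (-x^2 + c*x)‖ = Real.exp (-x^2 + c.re*x) := by
  rw [Complex.norm_exp]
  congr 1
  simp [Complex.add_re, Complex.neg_re, ← Complex.ofReal_pow, Complex.mul_re]

lemma integrable_cexp_simple (c : ℂ) : Integrable (fun x : ℝ => Complex.exp (-x^2 + c*x)) := by
  have := integrable_cexp_quadratic (b := 1) (by norm_num) c 0
  simpa using this

lemma integral_cexp_simple (c : ℂ) :
    ∫ x : ℝ, Complex.exp (-x^2 + c*x) = (π : ℂ)^(1/2 : ℂ) * Complex.exp (c^2/4) := by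
  have := integral_cexp_quadratic (b := -1) (by norm_num) c 0
  rw [show (fun x : ℝ => Complex.exp (-(x:ℂ)^2 + c*x)) = fun x : ℝ => Complex.exp ((-1:ℂ)*x^2 + c*x + 0) by ext x; norm_num, this]
  norm_num
  congr 1
  ring

lemma integrable_mul_cexp_simple (c : ℂ) : Integrable (fun x : ℝ => (x:ℂ) * Complex.exp (-x^2 + c*x)) := by
  have h1 := (integrable_cexp_simple (c+1)).norm
  have h2 := (integrable_cexp_simple (c-1)).norm
  refine ((h1.add h2).mono' ?_ ?_)
  · exact (Complex.continuous_ofReal.mul (Complex.continuous_exp.comp (by continuity))).aestronglyMeasurable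
  · refine Filter.Eventually.of_forall (fun x => ?_)
    have hx : |x| ≤ Real.exp x + Real.exp (-x) := by
      rcases le_or_gt 0 x with h | h
      · rw [_root_.abs_of_nonneg h]
        exact le_add_of_le_of_nonneg ((Real.add_one_le_exp x).trans' (by linarith)) (Real.exp_nonneg _)
      · rw [_root_.abs_of_neg h]
        exact le_add_of_nonneg_of_le (Real.exp_nonneg _) ((Real.add_one_le_exp (-x)).trans' (by linarith))
    simp only [norm_mul, Complex.norm_real, Real.norm_eq_abs, cexp_norm_simple, Pi.add_apply]
    calc |x| * Real.exp (-x^2 + c.re*x) ≤ (Real.exp x + Real.exp (-x)) * Real.exp (-x^2 + c.re*x) :=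
          mul_le_mul_of_nonneg_right hx (Real.exp_nonneg _)
      _ = Real.exp (-x^2 + (c+1).re*x) + Real.exp (-x^2 + (c-1).re*x) := by
          rw [add_mul, ← Real.exp_add, ← Real.exp_add]
          simp only [Complex.add_re, Complex.sub_re, Complex.one_re]
          ring_nf

lemma hasDerivAt_cexp_simple (c : ℂ) (x : ℝ) :
    HasDerivAt (fun x : ℝ => Complex.exp (-x^2 + c*x))
      ((-2*x + c) * Complex.exp (-x^2 + c*x)) x := by
  have h : HasDerivAt (fun z : ℂ => Complex.exp (-z^2 + c*z))
      (Complex.exp (-(x:ℂ)^2 + c*x) * (-(2*x) + c)) (x : ℝ) := by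
    have hg : HasDerivAt (fun z : ℂ => -z^2 + c*z) (-(2*(x:ℂ)) + c) (x:ℂ) := by
      simpa [mul_comm] using ((hasDerivAt_pow 2 (x:ℂ)).fun_neg.fun_add ((hasDerivAt_id (x:ℂ)).const_mul c))
    exact hg.cexp
  have := h.comp_ofReal
  convert this using 1
  ring

lemma integral_deriv_cexp_simple (c : ℂ) :
    ∫ x : ℝ, (-2*(x:ℂ) + c) * Complex.exp (-x^2 + c*x) = 0 := by
  have hint : Integrable (fun x : ℝ => (-2*(x:ℂ) + c) * Complex.exp (-x^2 + c*x)) := by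
    have := ((integrable_mul_cexp_simple c).const_mul (-2)).add ((integrable_cexp_simple c).const_mul c)
    refine this.congr (Filter.Eventually.of_forall fun x => ?_)
    simp only [Pi.add_apply]
    ring
  have h1 : ∫ x in Set.Iic (0:ℝ), (-2*(x:ℂ) + c) * Complex.exp (-x^2 + c*x)
      = Complex.exp (-(0:ℝ)^2 + c*(0:ℝ)) - 0 :=
    integral_Iic_of_hasDerivAt_of_tendsto' (fun x _ => hasDerivAt_cexp_simple c x)
      hint.integrableOn (cexp_quad_tendsto_zero' c)
  have h2 : ∫ x in Set.Ioi (0:ℝ), (-2*(x:ℂ) + c) * Complex.exp (-x^2 + c*x)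
      = 0 - Complex.exp (-(0:ℝ)^2 + c*(0:ℝ)) :=
    integral_Ioi_of_hasDerivAt_of_tendsto' (fun x _ => hasDerivAt_cexp_simple c x)
      hint.integrableOn (cexp_quad_tendsto_zero c)
  rw [← intervalIntegral.integral_Iic_add_Ioi hint.integrableOn hint.integrableOn, h1, h2]
  ring

lemma integral_mul_cexp_simple (c : ℂ) :
    ∫ x : ℝ, (x:ℂ) * Complex.exp (-x^2 + c*x)
      = c/2 * ((π : ℂ)^(1/2 : ℂ) * Complex.exp (c^2/4)) := by
  have key : (fun x : ℝ => (x:ℂ) * Complex.exp (-x^2 + c*x))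
      = fun x : ℝ => (c/2) * Complex.exp (-x^2 + c*x)
        - (1/2) * ((-2*(x:ℂ) + c) * Complex.exp (-x^2 + c*x)) := by
    ext x; ring
  rw [key, integral_sub (((integrable_cexp_simple c).const_mul _))]
  · rw [integral_const_mul, integral_const_mul, integral_deriv_cexp_simple,
      integral_cexp_simple]
    ring
  · refine (((integrable_mul_cexp_simple c).const_mul (-2)).add
      ((integrable_cexp_simple c).const_mul c)).congr ?_ |>.const_mul _
    exact Filter.Eventually.of_forall fun x => by simp only [Pi.add_apply]; ring



lemma dot3 {n : ℕ} {α : Type*} [CommRing α] (M N : Matrix (Fin n) (Fin n) α)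
    (v w : Fin n → α) : (M *ᵥ v) ⬝ᵥ (N *ᵥ w) = v ⬝ᵥ ((Mᵀ*N) *ᵥ w) := by
  rw [dotProduct_comm, dotProduct_mulVec, dotProduct_comm ((N *ᵥ w) ᵥ* M) v]
  congr 1
  rw [← Matrix.mulVec_transpose, Matrix.mulVec_mulVec]

lemma cov {n : ℕ} {B : Matrix (Fin n) (Fin n) ℝ} (hB : B.det ≠ 0) (f : (Fin n → ℝ) → ℂ) :
    (Integrable f ↔ Integrable (fun v => f (B *ᵥ v))) ∧
    ∫ u, f u = |B.det| * ∫ v, f (B *ᵥ v) := by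
  have hInv : Invertible B := B.invertibleOfIsUnitDet (isUnit_iff_ne_zero.2 hB)
  set e := Matrix.toLinearEquiv' B hInv with he
  have hce : ⇑e = ⇑(Matrix.toLin' B) := rfl
  have me : MeasurableEmbedding (⇑(Matrix.toLin' B)) := by
    rw [← hce]
    exact e.toContinuousLinearEquiv.toHomeomorph.measurableEmbedding
  have happ : ⇑(Matrix.toLin' B) = fun v => B *ᵥ v := by
    funext v; exact Matrix.toLin'_apply B v
  have hd0 : ENNReal.ofReal |B.det| ≠ 0 := by
    simp [ENNReal.ofReal_eq_zero, abs_pos.2 hB, not_le.2 (abs_pos.2 hB)]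
  have hvol : (volume : Measure (Fin n → ℝ)) =
      ENNReal.ofReal |B.det| • Measure.map (Matrix.toLin' B) volume := by
    rw [Real.map_matrix_volume_pi_eq_smul_volume_pi hB, smul_smul,
      ← ENNReal.ofReal_mul (abs_nonneg _), abs_inv, mul_inv_cancel₀ (abs_ne_zero.2 hB),
      ENNReal.ofReal_one, one_smul]
  constructor
  · rw [show (fun v => f (B *ᵥ v)) = f ∘ ⇑(Matrix.toLin' B) by rw [happ]; rfl]
    conv_lhs => rw [hvol]
    rw [integrable_smul_measure hd0 ENNReal.ofReal_ne_top]
    exact me.integrable_map_iff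
  · conv_lhs => rw [hvol]
    rw [integral_smul_measure, me.integral_map, ENNReal.toReal_ofReal (abs_nonneg _)]
    simp only [happ, Complex.real_smul, Complex.ofReal_mul]

lemma prod_gauss {n : ℕ} (c : Fin n → ℂ) :
    ∏ i : Fin n, ((π:ℂ)^(1/2:ℂ) * Complex.exp (c i^2/4))
      = ((π:ℂ)^(1/2:ℂ))^n * Complex.exp ((∑ i, c i^2)/4) := by
  rw [Finset.prod_mul_distrib, Finset.prod_const, ← Complex.exp_sum, Finset.card_univ,
    Fintype.card_fin, ← Finset.sum_div]

lemma gaussPlain {n : ℕ} (c : Fin n → ℂ) :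
    Integrable (fun v : Fin n → ℝ => Complex.exp (∑ i, (-(v i:ℂ)^2 + c i * v i))) ∧
    ∫ v : Fin n → ℝ, Complex.exp (∑ i, (-(v i:ℂ)^2 + c i * v i))
      = ((π:ℂ)^(1/2:ℂ))^n * Complex.exp ((∑ i, c i^2)/4) := by
  have hshape : (fun v : Fin n → ℝ => Complex.exp (∑ i, (-(v i:ℂ)^2 + c i * v i)))
      = fun v => ∏ i, (fun i (x : ℝ) => Complex.exp (-(x:ℂ)^2 + c i * x)) i (v i) := by
    funext v; rw [← Complex.exp_sum]
  constructor
  · rw [hshape]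
    exact Integrable.fintype_prod (fun i => integrable_cexp_simple (c i))
  · rw [hshape, volume_pi, integral_fintype_prod_eq_prod
      (fun i (x : ℝ) => Complex.exp (-(x:ℂ)^2 + c i * x))]
    simp_rw [integral_cexp_simple]
    exact prod_gauss c

lemma gaussMoment {n : ℕ} (c : Fin n → ℂ) (j : Fin n) :
    Integrable (fun v : Fin n → ℝ => Complex.exp (∑ i, (-(v i:ℂ)^2 + c i * v i)) * v j) ∧
    ∫ v : Fin n → ℝ, Complex.exp (∑ i, (-(v i:ℂ)^2 + c i * v i)) * v j
      = (c j / 2) * (((π:ℂ)^(1/2:ℂ))^n * Complex.exp ((∑ i, c i^2)/4)) := by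
  set F : Fin n → ℝ → ℂ :=
    fun i x => (if i = j then (x:ℂ) else 1) * Complex.exp (-(x:ℂ)^2 + c i * x) with hF
  have hFint : ∀ i, Integrable (F i) := by
    intro i
    by_cases h : i = j
    · simpa [hF, h] using integrable_mul_cexp_simple (c i)
    · simpa [hF, h] using integrable_cexp_simple (c i)
  have hshape : (fun v : Fin n → ℝ => Complex.exp (∑ i, (-(v i:ℂ)^2 + c i * v i)) * v j)
      = fun v => ∏ i, F i (v i) := by
    funext v
    simp only [hF]
    rw [Finset.prod_mul_distrib, ← Complex.exp_sum, Finset.prod_ite_eq', if_pos (Finset.mem_univ j)]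
    ring
  have hFval : ∀ i, ∫ x : ℝ, F i x
      = (if i = j then c i / 2 else 1) * ((π:ℂ)^(1/2:ℂ) * Complex.exp (c i^2/4)) := by
    intro i
    by_cases h : i = j
    · subst h
      simp only [hF, if_true]
      exact integral_mul_cexp_simple (c i)
    · simp only [hF, h, if_false, one_mul]
      exact integral_cexp_simple (c i)
  constructor
  · rw [hshape]; exact Integrable.fintype_prod hFint
  · rw [hshape, volume_pi, integral_fintype_prod_eq_prod F]
    simp_rw [hFval]
    rw [Finset.prod_mul_distrib, Finset.prod_ite_eq', if_pos (Finset.mem_univ j), prod_gauss c]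

lemma master {n : ℕ} (Sg : Matrix (Fin n) (Fin n) ℝ) (hpos : Sg.PosDef) (z : Fin n → ℂ)
    (k : Fin n) :
    Integrable (fun u : Fin n → ℝ =>
      Complex.exp ((-(qf Sg u) : ℝ) + (fun i => (u i:ℂ)) ⬝ᵥ z) * u k) ∧
    (gaussConst Sg : ℂ) * ∫ u : Fin n → ℝ,
        Complex.exp ((-(qf Sg u) : ℝ) + (fun i => (u i:ℂ)) ⬝ᵥ z) * u k
      = Complex.exp ((1/4 : ℂ) * qfC Sg⁻¹ z) *
          ((1/2 : ℂ) * ((Sg⁻¹.map (fun a => (a:ℂ))) *ᵥ z) k) := by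
  have hdet : Sg.det ≠ 0 := hpos.det_pos.ne'
  have hdetpos : 0 < Sg.det := hpos.det_pos
  have hposinv : Sg⁻¹.PosDef := hpos.inv
  set B := CFC.sqrt (Sg⁻¹) with hBdef
  have hBB : B * B = Sg⁻¹ := CFC.sqrt_mul_sqrt_self _ hposinv.posSemidef.nonneg
  have hBsymm : Bᵀ = B := by
    rw [← Matrix.conjTranspose_eq_transpose_of_trivial]
    exact (CFC.sqrt_nonneg (Sg⁻¹)).isSelfAdjoint
  have hdetinv : (Sg⁻¹).det = Sg.det⁻¹ := by
    simp [Matrix.det_nonsing_inv, Ring.inverse_eq_inv']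
  have hdetB2 : B.det * B.det = Sg.det⁻¹ := by rw [← Matrix.det_mul, hBB, hdetinv]
  have hdetB : B.det ≠ 0 := by
    intro h
    rw [h, mul_zero] at hdetB2
    exact inv_ne_zero hdet hdetB2.symm
  have habs : |B.det| = (Real.sqrt Sg.det)⁻¹ := by
    rw [← Real.sqrt_mul_self_eq_abs, hdetB2, Real.sqrt_inv]
  have hSB : Sg * Sg⁻¹ = 1 := Matrix.mul_nonsing_inv _ (isUnit_iff_ne_zero.2 hdet)
  have hBunit : IsUnit B.det := isUnit_iff_ne_zero.2 hdetB
  have hBSB : B * Sg * B = 1 := by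
    have h1 : (B * Sg * B) * B = B := by
      rw [Matrix.mul_assoc (B * Sg) B B, hBB, Matrix.mul_assoc B Sg Sg⁻¹, hSB, Matrix.mul_one]
    calc B*Sg*B = (B*Sg*B)*(B*B⁻¹) := by rw [Matrix.mul_nonsing_inv B hBunit, Matrix.mul_one]
      _ = ((B*Sg*B)*B)*B⁻¹ := by simp only [Matrix.mul_assoc]
      _ = B*B⁻¹ := by rw [h1]
      _ = 1 := Matrix.mul_nonsing_inv B hBunit
  set Bc : Matrix (Fin n) (Fin n) ℂ := B.map (fun a => (a:ℂ)) with hBc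
  set c : Fin n → ℂ := Bc *ᵥ z with hc
  have hBcT : Bcᵀ = Bc := by
    rw [hBc, ← Matrix.transpose_map, hBsymm]
  have hBcBc : Bc * Bc = Sg⁻¹.map (fun a => (a:ℂ)) := by
    rw [hBc, show (fun a : ℝ => (a:ℂ)) = ⇑Complex.ofRealHom from rfl,
      ← Matrix.map_mul, hBB]
  -- pointwise identity for exponent
  have hexp : ∀ v : Fin n → ℝ,
      ((-(qf Sg (B *ᵥ v)) : ℝ) : ℂ) + (fun i => ((B *ᵥ v) i :ℂ)) ⬝ᵥ z
        = ∑ i, (-(v i:ℂ)^2 + c i * v i) := by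
    intro v
    have ha : qf Sg (B *ᵥ v) = v ⬝ᵥ v := by
      rw [qf, Matrix.mulVec_mulVec, dot3, hBsymm, ← Matrix.mul_assoc, hBSB, Matrix.one_mulVec]
    have hb : (fun i => ((B *ᵥ v) i : ℂ)) = Bc *ᵥ (fun i => (v i : ℂ)) := by
      funext i
      exact RingHom.map_mulVec Complex.ofRealHom B v i
    have hcdot : (Bc *ᵥ (fun i => (v i : ℂ))) ⬝ᵥ z = ∑ i, c i * v i := by
      have h1 : (Bc *ᵥ (fun i => (v i : ℂ))) ⬝ᵥ z
          = (Bc *ᵥ (fun i => (v i : ℂ))) ⬝ᵥ ((1 : Matrix (Fin n) (Fin n) ℂ) *ᵥ z) := by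
        rw [Matrix.one_mulVec]
      rw [h1, dot3, hBcT, Matrix.mul_one]
      simp only [dotProduct, hc]
      exact Finset.sum_congr rfl fun i _ => mul_comm _ _
    rw [ha, hb, hcdot]
    push_cast [dotProduct]
    rw [← Finset.sum_neg_distrib, ← Finset.sum_add_distrib]
    exact Finset.sum_congr rfl fun i _ => by ring
  have hlin : ∀ v : Fin n → ℝ, (((B *ᵥ v) k : ℝ) : ℂ) = ∑ j, (B k j : ℂ) * v j := by
    intro v
    simp only [Matrix.mulVec, dotProduct]
    push_cast
    rfl
  set f : (Fin n → ℝ) → ℂ :=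
    fun u => Complex.exp ((-(qf Sg u) : ℝ) + (fun i => (u i:ℂ)) ⬝ᵥ z) * u k with hf
  have hcomp : (fun v : Fin n → ℝ => f (B *ᵥ v))
      = fun v => ∑ j, (B k j : ℂ) * (Complex.exp (∑ i, (-(v i:ℂ)^2 + c i * v i)) * v j) := by
    funext v
    rw [hf]
    simp only
    rw [hexp v, hlin v, Finset.mul_sum]
    exact Finset.sum_congr rfl fun j _ => by ring
  have hint2 : Integrable (fun v : Fin n → ℝ =>
      ∑ j, (B k j : ℂ) * (Complex.exp (∑ i, (-(v i:ℂ)^2 + c i * v i)) * v j)) :=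
    integrable_finset_sum _ fun j _ => ((gaussMoment c j).1.const_mul _)
  have hint : Integrable f := by
    rw [(cov hdetB f).1, hcomp]
    exact hint2
  refine ⟨hint, ?_⟩
  have hsum : ∑ i, c i ^ 2 = qfC Sg⁻¹ z := by
    have h1 : ∑ i, c i ^ 2 = c ⬝ᵥ c := by
      simp only [dotProduct]
      exact Finset.sum_congr rfl fun i _ => (sq (c i))
    rw [h1, hc, dot3, hBcT, hBcBc, qfC]
  rw [(cov hdetB f).2, hcomp, integral_finset_sum _ (fun j _ => ((gaussMoment c j).1.const_mul _))]
  simp_rw [MeasureTheory.integral_const_mul, (gaussMoment c _).2]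
  -- now pure algebra
  have hsum2 : ∑ j, (B k j : ℂ) * (c j / 2 * (((π:ℂ)^(1/2:ℂ))^n * Complex.exp ((∑ i, c i^2)/4)))
      = ((Sg⁻¹.map (fun a => (a:ℂ))) *ᵥ z) k / 2 * (((π:ℂ)^(1/2:ℂ))^n * Complex.exp ((∑ i, c i^2)/4)) := by
    have hterm : ∀ j, (B k j : ℂ) * (c j / 2 * (((π:ℂ)^(1/2:ℂ))^n * Complex.exp ((∑ i, c i^2)/4)))
        = ((B k j : ℂ) * c j) / 2 * (((π:ℂ)^(1/2:ℂ))^n * Complex.exp ((∑ i, c i^2)/4)) :=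
      fun j => by ring
    simp_rw [hterm]
    rw [← Finset.sum_mul, ← Finset.sum_div]
    congr 2
    rw [← hBcBc, ← Matrix.mulVec_mulVec, ← hc]
    simp only [Matrix.mulVec, dotProduct, hBc, Matrix.map_apply]
  rw [hsum2]
  have hpi : (((π:ℂ))^(1/2:ℂ))^n = ((Real.sqrt (π^n) : ℝ) : ℂ) := by
    rw [show (1/2:ℂ) = ((1/2:ℝ):ℂ) by norm_num, ← Complex.ofReal_cpow pi_pos.le]
    norm_cast
    rw [← Real.rpow_natCast (π ^ (1/2:ℝ)) n, ← Real.rpow_mul pi_pos.le,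
      Real.sqrt_eq_rpow, ← Real.rpow_natCast π n, ← Real.rpow_mul pi_pos.le]
    ring_nf
  rw [hpi, hsum]
  have hsq : Real.sqrt (π ^ n) ≠ 0 := by
    positivity
  have hsd : Real.sqrt Sg.det ≠ 0 := by positivity
  have hsqC : ((Real.sqrt (π ^ n) : ℝ) : ℂ) ≠ 0 := by exact_mod_cast hsq
  have hsdC : ((Real.sqrt Sg.det : ℝ) : ℂ) ≠ 0 := by exact_mod_cast hsd
  rw [gaussConst, habs, show ((1:ℂ)/4) * qfC Sg⁻¹ z = qfC Sg⁻¹ z / 4 by ring]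
  push_cast
  field_simp

section final
variable {n : ℕ} (Sg Th : Matrix (Fin n) (Fin n) ℝ) (w : Fin n → ℝ)

lemma coe_dot (A : Matrix (Fin n) (Fin n) ℝ) (u v : Fin n → ℝ) :
    ((u ⬝ᵥ A *ᵥ v : ℝ) : ℂ) = (fun i => (u i:ℂ)) ⬝ᵥ ((A.map (fun a => (a:ℂ))) *ᵥ (fun j => (v j:ℂ))) := by
  rw [show ((u ⬝ᵥ A *ᵥ v : ℝ) : ℂ) = Complex.ofRealHom (u ⬝ᵥ A *ᵥ v) from rfl,
    RingHom.map_dotProduct]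
  congr 1
  funext i
  exact RingHom.map_mulVec Complex.ofRealHom A v i

lemma dotP_zetaP (u : Fin n → ℝ) :
    (fun i => (u i:ℂ)) ⬝ᵥ zetaP Sg Th w
      = (-(u ⬝ᵥ Sg *ᵥ w) : ℝ) + Complex.I * (u ⬝ᵥ Th *ᵥ w : ℝ) := by
  rw [zetaP, Matrix.add_mulVec, dotProduct_add,
    show Sg.map (fun a => (-a : ℂ)) = -(Sg.map fun a => (a:ℂ)) by
      ext i j; simp [Matrix.map_apply],
    Matrix.neg_mulVec, dotProduct_neg, ← coe_dot,
    Matrix.smul_mulVec, dotProduct_smul, ← coe_dot, smul_eq_mul]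
  push_cast
  ring

lemma dotP_zetaM (u : Fin n → ℝ) :
    (fun i => (u i:ℂ)) ⬝ᵥ zetaM Sg Th w
      = (-(u ⬝ᵥ Sg *ᵥ w) : ℝ) - Complex.I * (u ⬝ᵥ Th *ᵥ w : ℝ) := by
  rw [zetaM, Matrix.sub_mulVec, dotProduct_sub,
    show Sg.map (fun a => (-a : ℂ)) = -(Sg.map fun a => (a:ℂ)) by
      ext i j; simp [Matrix.map_apply],
    Matrix.neg_mulVec, dotProduct_neg, ← coe_dot,
    Matrix.smul_mulVec, dotProduct_smul, ← coe_dot, smul_eq_mul]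
  push_cast
  ring

lemma fim (k : Fin n) (u : Fin n → ℝ) :
    (Complex.exp ((-(qf Sg u) : ℝ) + (fun i => (u i:ℂ)) ⬝ᵥ zetaP Sg Th w) * u k).im
      = Real.exp (-(qf Sg u)) * Real.sin (u ⬝ᵥ Th.mulVec w) *
          Real.exp (-(u ⬝ᵥ Sg.mulVec w)) * u k := by
  rw [dotP_zetaP]
  rw [show ((-(qf Sg u) : ℝ) : ℂ) + ((-(u ⬝ᵥ Sg *ᵥ w) : ℝ) + Complex.I * (u ⬝ᵥ Th *ᵥ w : ℝ))
      = ((-(qf Sg u) + -(u ⬝ᵥ Sg *ᵥ w) : ℝ) : ℂ) + ((u ⬝ᵥ Th *ᵥ w : ℝ) : ℂ) * Complex.I by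
    push_cast; ring]
  rw [Complex.exp_add, ← Complex.ofReal_exp, Complex.exp_mul_I,
    ← Complex.ofReal_cos, ← Complex.ofReal_sin]
  rw [show (↑(Real.exp (-(qf Sg u) + -(u ⬝ᵥ Sg *ᵥ w))) *
        (↑(Real.cos (u ⬝ᵥ Th *ᵥ w)) + ↑(Real.sin (u ⬝ᵥ Th *ᵥ w)) * Complex.I)) * (u k : ℂ)
      = ↑(Real.exp (-(qf Sg u) + -(u ⬝ᵥ Sg *ᵥ w)) * Real.cos (u ⬝ᵥ Th *ᵥ w) * u k)
        + ↑(Real.exp (-(qf Sg u) + -(u ⬝ᵥ Sg *ᵥ w)) * Real.sin (u ⬝ᵥ Th *ᵥ w) * u k) * Complex.I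
      by push_cast; ring]
  simp only [Complex.add_im, Complex.ofReal_im, Complex.mul_im, Complex.I_im, Complex.I_re,
    Complex.ofReal_re, mul_one, mul_zero, zero_add, add_zero, zero_mul]
  rw [Real.exp_add]
  ring

end final

section conj
variable {n : ℕ} (Sg Th : Matrix (Fin n) (Fin n) ℝ) (w : Fin n → ℝ)

lemma zetaM_conj : zetaM Sg Th w = fun j => (starRingEnd ℂ) (zetaP Sg Th w j) := by
  funext j
  simp only [zetaM, zetaP, Matrix.mulVec, dotProduct, map_sum, Matrix.sub_apply,
    Matrix.add_apply, Matrix.smul_apply, Matrix.map_apply, smul_eq_mul, _root_.map_mul, map_add,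
    map_sub, map_neg, Complex.conj_ofReal, Complex.conj_I]
  exact Finset.sum_congr rfl fun i _ => by ring

lemma qfC_conj (A : Matrix (Fin n) (Fin n) ℝ) (z : Fin n → ℂ) :
    qfC A (fun i => (starRingEnd ℂ) (z i)) = (starRingEnd ℂ) (qfC A z) := by
  simp only [qfC, dotProduct, Matrix.mulVec, Matrix.map_apply, map_sum, _root_.map_mul,
    Complex.conj_ofReal]

lemma mulVec_conj (A : Matrix (Fin n) (Fin n) ℝ) (z : Fin n → ℂ) (k : Fin n) :
    ((A.map (fun a => (a:ℂ))) *ᵥ (fun i => (starRingEnd ℂ) (z i))) k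
      = (starRingEnd ℂ) (((A.map (fun a => (a:ℂ))) *ᵥ z) k) := by
  simp only [Matrix.mulVec, dotProduct, Matrix.map_apply, map_sum, _root_.map_mul,
    Complex.conj_ofReal]

lemma mgfGrad_conj (k : Fin n) :
    mgfGrad Sg (zetaM Sg Th w) k = (starRingEnd ℂ) (mgfGrad Sg (zetaP Sg Th w) k) := by
  rw [zetaM_conj]
  simp only [mgfGrad]
  rw [qfC_conj, mulVec_conj]
  simp only [_root_.map_mul, ← Complex.exp_conj, map_div₀, _root_.map_one, map_ofNat]

end conj

end helperLemmas

/-- with `ζ := (−Σ + iΘ)w`,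
`π^{−n/2}√(det Σ) ∫ e^{−uᵀΣu} sin(uᵀΘw) e^{−uᵀΣw} u du = Im((1/2) e^{(1/4)ζᵀΣ⁻¹ζ} Σ⁻¹ζ)`,
entrywise, with absolute convergence; equivalently the left-hand side equals
`(1/(2i))(φ'_Σ((−Σ+iΘ)w) − φ'_Σ(−(Σ+iΘ)w))`. -/
theorem stmt11 {n : ℕ} (hn : 1 ≤ n) (Sg : Matrix (Fin n) (Fin n) ℝ)
    (hsymm : Sg.IsSymm) (hpos : Sg.PosDef)
    (Th : Matrix (Fin n) (Fin n) ℝ) (hanti : Thᵀ = -Th) (w : Fin n → ℝ) :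
    (∀ k : Fin n,
      Integrable (fun u : Fin n → ℝ =>
        Real.exp (-(qf Sg u)) * Real.sin (u ⬝ᵥ Th.mulVec w) *
          Real.exp (-(u ⬝ᵥ Sg.mulVec w)) * u k)) ∧
    (∀ k : Fin n,
      gaussConst Sg *
          ∫ u : Fin n → ℝ,
            Real.exp (-(qf Sg u)) * Real.sin (u ⬝ᵥ Th.mulVec w) *
              Real.exp (-(u ⬝ᵥ Sg.mulVec w)) * u k =
        (mgfGrad Sg (zetaP Sg Th w) k).im) ∧
    ∀ k : Fin n,
      ((gaussConst Sg *
          ∫ u : Fin n → ℝ,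
            Real.exp (-(qf Sg u)) * Real.sin (u ⬝ᵥ Th.mulVec w) *
              Real.exp (-(u ⬝ᵥ Sg.mulVec w)) * u k : ℝ) : ℂ) =
        (1 / (2 * Complex.I)) * (mgfGrad Sg (zetaP Sg Th w) k - mgfGrad Sg (zetaM Sg Th w) k):= by
  have hint : ∀ k : Fin n,
      Integrable (fun u : Fin n → ℝ =>
        Real.exp (-(qf Sg u)) * Real.sin (u ⬝ᵥ Th.mulVec w) *
          Real.exp (-(u ⬝ᵥ Sg.mulVec w)) * u k) := by
    intro k
    have h := (master Sg hpos (zetaP Sg Th w) k).1.im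
    exact h.congr (Filter.Eventually.of_forall fun u => fim Sg Th w k u)
  have hval : ∀ k : Fin n,
      gaussConst Sg *
          ∫ u : Fin n → ℝ,
            Real.exp (-(qf Sg u)) * Real.sin (u ⬝ᵥ Th.mulVec w) *
              Real.exp (-(u ⬝ᵥ Sg.mulVec w)) * u k =
        (mgfGrad Sg (zetaP Sg Th w) k).im := by
    intro k
    have h1 : ∫ u : Fin n → ℝ,
        Real.exp (-(qf Sg u)) * Real.sin (u ⬝ᵥ Th.mulVec w) *
          Real.exp (-(u ⬝ᵥ Sg.mulVec w)) * u k
        = (∫ u : Fin n → ℝ,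
            Complex.exp ((-(qf Sg u) : ℝ) + (fun i => (u i:ℂ)) ⬝ᵥ zetaP Sg Th w) * u k).im := by
      calc ∫ u : Fin n → ℝ,
            Real.exp (-(qf Sg u)) * Real.sin (u ⬝ᵥ Th.mulVec w) *
              Real.exp (-(u ⬝ᵥ Sg.mulVec w)) * u k
          = ∫ u : Fin n → ℝ,
            (Complex.exp ((-(qf Sg u) : ℝ) + (fun i => (u i:ℂ)) ⬝ᵥ zetaP Sg Th w) * u k).im :=
          integral_congr_ae (Filter.Eventually.of_forall fun u => (fim Sg Th w k u).symm)
        _ = _ := integral_im (master Sg hpos (zetaP Sg Th w) k).1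
    rw [h1]
    have h2 : ∀ (r : ℝ) (z : ℂ), r * z.im = ((r:ℂ) * z).im := by
      intro r z
      simp [Complex.mul_im]
    rw [h2, (master Sg hpos (zetaP Sg Th w) k).2]
    rw [mgfGrad]
    have : Complex.exp ((1/4 : ℂ) * qfC Sg⁻¹ (zetaP Sg Th w)) *
          ((1/2 : ℂ) * ((Sg⁻¹.map (fun a => (a:ℂ))) *ᵥ zetaP Sg Th w) k)
        = (1/2 : ℂ) * Complex.exp ((1/4 : ℂ) * qfC Sg⁻¹ (zetaP Sg Th w)) *
            ((Sg⁻¹.map (fun a => (a:ℂ))) *ᵥ zetaP Sg Th w) k := by ring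
    rw [this]
  refine ⟨hint, hval, fun k => ?_⟩
  rw [hval k, mgfGrad_conj Sg Th w k, Complex.im_eq_sub_conj]
  ring
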